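/- arXiv:2003.05402 — 2 statements merged into one kernel-verified Lean document; each statement's English description precedes it below -/
import Mathlib

section
/- Let $e^M(\cdot)$ and $\tilde{e}^M(\cdot)$ be two collections of orthonormal function bases, where for each $j = 1,\dots,p$, $e_j^M$ and $\tilde{e}_j^M$ are orthonormal bases of the same $M$-dimensional subspace $\mathbb{V}_j^M$ of a separable Hilbert space. Let $\Theta^{X,M}$ and $\tilde\Theta^{X,M}$ (resp. $\Theta^{Y,M}$, $\tilde\Theta^{Y,M}$) be the precision matrices of the projection score vectors of a $p$-dimensional Gaussian process $X$ (resp. $Y$) with respect to the two bases, and let $\Delta^M = \Theta^{X,M} - \Theta^{Y,M}$, $\tilde\Delta^M = \tilde\Theta^{X,M} - \tilde\Theta^{Y,M}$, with $(j,l)$-th $M \times M$ blocks $\Delta^M_{jl}$ and $\tilde\Delta^M_{jl}$. Then $\|\Delta^M_{jl}\|_F = \|\tilde\Delta^M_{jl}\|_F$ for every pair $(j,l)$; in particular, the differential edge set $E_\Delta^\pi = \{(j,l) : j < l, \|\Delta^M_{jl}\|_F > 0\}$ is independent of the choice of orthonormal basis of $\mathbb{V}_{[p]}^M$. -/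
open MeasureTheory Matrix

section Aux

section Aux
variable {H : Type*} [NormedAddCommGroup H] [InnerProductSpace ℝ H] {M : ℕ}

lemma aux_expand (e et : Fin M → H) (he : Orthonormal ℝ e)
    (hspan : Submodule.span ℝ (Set.range e) = Submodule.span ℝ (Set.range et))
    (k : Fin M) : et k = ∑ n, (inner ℝ (et k) (e n) : ℝ) • e n := by
  have hmem : et k ∈ Submodule.span ℝ (Set.range e) := by
    rw [hspan]; exact Submodule.subset_span (Set.mem_range_self k)
  rw [Submodule.mem_span_range_iff_exists_fun ℝ] at hmem
  obtain ⟨c, hc⟩ := hmem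
  have hcoef : ∀ n, (inner ℝ (et k) (e n) : ℝ) = c n := by
    intro n
    rw [← hc, sum_inner]
    simp [real_inner_smul_left, orthonormal_iff_ite.mp he, Finset.sum_ite_eq]
  simp_rw [hcoef]
  exact hc.symm

lemma aux_inner_expand (e et : Fin M → H) (he : Orthonormal ℝ e)
    (hspan : Submodule.span ℝ (Set.range e) = Submodule.span ℝ (Set.range et))
    (k : Fin M) (x : H) :
    (inner ℝ x (et k) : ℝ) = ∑ n, (inner ℝ (et k) (e n) : ℝ) * (inner ℝ x (e n) : ℝ) := by
  conv_lhs => rw [aux_expand e et he hspan k]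
  rw [inner_sum]
  simp [real_inner_smul_right]

lemma aux_gram (e et : Fin M → H) (he : Orthonormal ℝ e) (het : Orthonormal ℝ et)
    (hspan : Submodule.span ℝ (Set.range e) = Submodule.span ℝ (Set.range et)) :
    (Matrix.of fun k n => (inner ℝ (et k) (e n) : ℝ)) *
      (Matrix.of fun k n => (inner ℝ (et k) (e n) : ℝ))ᵀ = 1 := by
  ext k m
  rw [Matrix.mul_apply]
  have : ∀ n, (Matrix.of fun k n => (inner ℝ (et k) (e n) : ℝ)) k n *
      (Matrix.of fun k n => (inner ℝ (et k) (e n) : ℝ))ᵀ n m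
      = (inner ℝ (et m) (e n) : ℝ) * (inner ℝ (et k) (e n) : ℝ) := by
    intro n; simp [Matrix.transpose_apply, mul_comm]
  simp_rw [this]
  rw [← aux_inner_expand e et he hspan m (et k)]
  simp [orthonormal_iff_ite.mp het, Matrix.one_apply]

lemma aux_conj_inv {n : Type*} [Fintype n] [DecidableEq n] (U A : Matrix n n ℝ)
    (hU : U * Uᵀ = 1) : (U * A * Uᵀ)⁻¹ = U * A⁻¹ * Uᵀ := by
  have hU' : Uᵀ * U = 1 := mul_eq_one_comm.mp hU
  have hdU : IsUnit U.det := Matrix.isUnit_det_of_right_inverse hU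
  by_cases h : IsUnit A.det
  · apply Matrix.inv_eq_right_inv
    calc U * A * Uᵀ * (U * A⁻¹ * Uᵀ) = U * A * (Uᵀ * U) * A⁻¹ * Uᵀ := by
          noncomm_ring
      _ = U * (A * A⁻¹) * Uᵀ := by rw [hU']; noncomm_ring
      _ = 1 := by rw [Matrix.mul_nonsing_inv A h, Matrix.mul_one, hU]
  · have h2 : ¬ IsUnit (U * A * Uᵀ).det := by
      intro hu
      apply h
      have hA : A = Uᵀ * (U * A * Uᵀ) * U := by
        calc A = (Uᵀ * U) * A * (Uᵀ * U) := by rw [hU']; noncomm_ring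
          _ = Uᵀ * (U * A * Uᵀ) * U := by noncomm_ring
      rw [hA, Matrix.det_mul, Matrix.det_mul, Matrix.det_transpose]
      exact (hdU.mul hu).mul hdU
    rw [Matrix.nonsing_inv_apply_not_isUnit _ h, Matrix.nonsing_inv_apply_not_isUnit _ h2,
      Matrix.mul_zero, Matrix.zero_mul]

lemma aux_trace (Uj Ul B : Matrix (Fin M) (Fin M) ℝ)
    (hUj : Ujᵀ * Uj = 1) (hUl : Ulᵀ * Ul = 1) :
    ∑ k, ∑ m, ((Uj * B * Ulᵀ) k m) ^ 2 = ∑ k, ∑ m, (B k m) ^ 2 := by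
  have key : ∀ C : Matrix (Fin M) (Fin M) ℝ, (C * Cᵀ).trace = ∑ k, ∑ m, (C k m) ^ 2 := by
    intro C
    simp [Matrix.trace, Matrix.mul_apply, sq, Matrix.diag]
  rw [← key, ← key]
  have h3 : (Uj * B * Ulᵀ) * (Uj * B * Ulᵀ)ᵀ = Uj * (B * Bᵀ) * Ujᵀ := by
    calc (Uj * B * Ulᵀ) * (Uj * B * Ulᵀ)ᵀ = Uj * B * (Ulᵀ * Ul) * Bᵀ * Ujᵀ := by
          simp [Matrix.transpose_mul]; noncomm_ring
      _ = Uj * (B * Bᵀ) * Ujᵀ := by rw [hUl]; noncomm_ring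
  rw [h3, Matrix.trace_mul_cycle, ← Matrix.mul_assoc, hUj, Matrix.one_mul]

variable {p : ℕ}

/-- block-diagonal assembly -/
def blkD (G : Fin p → Matrix (Fin M) (Fin M) ℝ) :
    Matrix (Fin p × Fin M) (Fin p × Fin M) ℝ :=
  fun x y => if x.1 = y.1 then G x.1 x.2 y.2 else 0

lemma blkD_conj_apply (G : Fin p → Matrix (Fin M) (Fin M) ℝ)
    (A : Matrix (Fin p × Fin M) (Fin p × Fin M) ℝ) (j l : Fin p) (k m : Fin M) :
    (blkD G * A * (blkD G)ᵀ) (j, k) (l, m)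
      = ∑ n, ∑ r, G j k n * A (j, n) (l, r) * G l m r := by
  have h1 : ∀ y, (blkD G * A) (j, k) y = ∑ n, G j k n * A (j, n) y := by
    intro y
    rw [Matrix.mul_apply]
    rw [Fintype.sum_prod_type]
    simp [blkD, ite_mul, zero_mul, Finset.sum_ite_eq]
  rw [Matrix.mul_apply]
  rw [Fintype.sum_prod_type]
  simp only [Matrix.transpose_apply, blkD, h1, mul_ite, mul_zero, Finset.sum_ite_eq,
    Finset.mem_univ, if_true, Finset.sum_mul]
  rw [Finset.sum_comm]
  simp only [Finset.sum_ite_eq, Finset.mem_univ, if_true]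
  rw [Finset.sum_comm]

lemma blkD_orth (G : Fin p → Matrix (Fin M) (Fin M) ℝ)
    (hG : ∀ j, G j * (G j)ᵀ = 1) : blkD G * (blkD G)ᵀ = 1 := by
  ext ⟨j, k⟩ ⟨l, m⟩
  rw [Matrix.mul_apply]
  simp only [Fintype.sum_prod_type, blkD, Matrix.transpose_apply]
  by_cases hjl : j = l
  · subst hjl
    have := congrFun (congrFun (hG j) k) m
    rw [Matrix.mul_apply] at this
    simp only [Matrix.transpose_apply] at this
    simp [Finset.sum_ite_eq, this, Matrix.one_apply, Prod.ext_iff]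
  · simp [Finset.sum_ite_eq, hjl, Matrix.one_apply, Prod.ext_iff]

end Aux


/-- Invariance of the differential graph under change of orthonormal basis.
For each node `j`, `e j` and `et j` are orthonormal bases of the same
`M`-dimensional subspace `𝕍ⱼᴹ` of a separable Hilbert space.  `Σ^{X,M}` (resp.
the tilde version) is the covariance of the stacked projection-score vector of
the mean-zero Gaussian process `X` with respect to the basis `e` (resp. `et`),
`Θ^{X,M}` its (pseudo-)inverse, similarly for `Y`, and `Δ^M = Θ^{X,M} - Θ^{Y,M}`.
Then the Frobenius norms of the `(j,l)` blocks of `Δ^M` and `Δ̃^M` coincide, and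
hence the differential edge set `{(j,l) : j < l, ‖Δ^M_{jl}‖_F > 0}` does not
depend on the choice of basis. -/
theorem differential_graph_basis_invariance
    (H : Type*) [NormedAddCommGroup H] [InnerProductSpace ℝ H]
    {Ω : Type*} [MeasurableSpace Ω] (μ : Measure Ω) [IsProbabilityMeasure μ]
    (p M : ℕ)
    (e et : Fin p → Fin M → H)
    (he : ∀ j, Orthonormal ℝ (e j)) (het : ∀ j, Orthonormal ℝ (et j))
    (hspan : ∀ j, Submodule.span ℝ (Set.range (e j)) =
      Submodule.span ℝ (Set.range (et j)))
    (X Y : Fin p → Ω → H)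
    (hXint : ∀ j k l m, Integrable
      (fun ω => (inner ℝ (X j ω) (e j k) : ℝ) * (inner ℝ (X l ω) (e l m) : ℝ)) μ)
    (hYint : ∀ j k l m, Integrable
      (fun ω => (inner ℝ (Y j ω) (e j k) : ℝ) * (inner ℝ (Y l ω) (e l m) : ℝ)) μ)
    (SigX SigY SigXt SigYt : Matrix (Fin p × Fin M) (Fin p × Fin M) ℝ)
    (hSigX : ∀ j k l m, SigX (j, k) (l, m) =
      ∫ ω, (inner ℝ (X j ω) (e j k) : ℝ) * (inner ℝ (X l ω) (e l m) : ℝ) ∂μ)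
    (hSigY : ∀ j k l m, SigY (j, k) (l, m) =
      ∫ ω, (inner ℝ (Y j ω) (e j k) : ℝ) * (inner ℝ (Y l ω) (e l m) : ℝ) ∂μ)
    (hSigXt : ∀ j k l m, SigXt (j, k) (l, m) =
      ∫ ω, (inner ℝ (X j ω) (et j k) : ℝ) * (inner ℝ (X l ω) (et l m) : ℝ) ∂μ)
    (hSigYt : ∀ j k l m, SigYt (j, k) (l, m) =
      ∫ ω, (inner ℝ (Y j ω) (et j k) : ℝ) * (inner ℝ (Y l ω) (et l m) : ℝ) ∂μ)
    (Δ Δt : Matrix (Fin p × Fin M) (Fin p × Fin M) ℝ)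
    (hΔ : Δ = SigX⁻¹ - SigY⁻¹) (hΔt : Δt = SigXt⁻¹ - SigYt⁻¹) :
    (∀ j l : Fin p,
      Real.sqrt (∑ k, ∑ m, (Δ (j, k) (l, m)) ^ 2) =
        Real.sqrt (∑ k, ∑ m, (Δt (j, k) (l, m)) ^ 2)) ∧
    {q : Fin p × Fin p | q.1 < q.2 ∧
        0 < Real.sqrt (∑ k, ∑ m, (Δ (q.1, k) (q.2, m)) ^ 2)} =
      {q : Fin p × Fin p | q.1 < q.2 ∧
        0 < Real.sqrt (∑ k, ∑ m, (Δt (q.1, k) (q.2, m)) ^ 2)} := by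

  set G : Fin p → Matrix (Fin M) (Fin M) ℝ :=
    fun j => Matrix.of fun k n => (inner ℝ (et j k) (e j n) : ℝ) with hGdef
  have hGorth : ∀ j, G j * (G j)ᵀ = 1 :=
    fun j => aux_gram (e j) (et j) (he j) (het j) (hspan j)
  have hUorth : blkD G * (blkD G)ᵀ = 1 := blkD_orth G hGorth
  -- covariance transformation
  have hcov : ∀ (Z : Fin p → Ω → H)
      (hZint : ∀ j k l m, Integrable
        (fun ω => (inner ℝ (Z j ω) (e j k) : ℝ) * (inner ℝ (Z l ω) (e l m) : ℝ)) μ)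
      (S St : Matrix (Fin p × Fin M) (Fin p × Fin M) ℝ)
      (hS : ∀ j k l m, S (j, k) (l, m) =
        ∫ ω, (inner ℝ (Z j ω) (e j k) : ℝ) * (inner ℝ (Z l ω) (e l m) : ℝ) ∂μ)
      (hSt : ∀ j k l m, St (j, k) (l, m) =
        ∫ ω, (inner ℝ (Z j ω) (et j k) : ℝ) * (inner ℝ (Z l ω) (et l m) : ℝ) ∂μ),
      St = blkD G * S * (blkD G)ᵀ := by
    intro Z hZint S St hS hSt
    ext ⟨j, k⟩ ⟨l, m⟩
    rw [blkD_conj_apply, hSt]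
    have hptwise : ∀ ω, (inner ℝ (Z j ω) (et j k) : ℝ) * (inner ℝ (Z l ω) (et l m) : ℝ)
        = ∑ n, ∑ r, (G j k n * G l m r) *
            ((inner ℝ (Z j ω) (e j n) : ℝ) * (inner ℝ (Z l ω) (e l r) : ℝ)) := by
      intro ω
      rw [aux_inner_expand (e j) (et j) (he j) (hspan j) k (Z j ω),
        aux_inner_expand (e l) (et l) (he l) (hspan l) m (Z l ω),
        Finset.sum_mul_sum]
      exact Finset.sum_congr rfl fun n _ => Finset.sum_congr rfl fun r _ => by
        simp only [hGdef, Matrix.of_apply]; ring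
    simp_rw [hptwise]
    rw [integral_finset_sum _ (fun n _ => integrable_finset_sum _
      (fun r _ => ((hZint j n l r).const_mul _)))]
    refine Finset.sum_congr rfl fun n _ => ?_
    rw [integral_finset_sum _ (fun r _ => ((hZint j n l r).const_mul _))]
    refine Finset.sum_congr rfl fun r _ => ?_
    rw [integral_const_mul, ← hS j n l r]
    ring
  have hSX : SigXt = blkD G * SigX * (blkD G)ᵀ := hcov X hXint SigX SigXt hSigX hSigXt
  have hSY : SigYt = blkD G * SigY * (blkD G)ᵀ := hcov Y hYint SigY SigYt hSigY hSigYt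
  have hΔrel : Δt = blkD G * Δ * (blkD G)ᵀ := by
    rw [hΔt, hSX, hSY, aux_conj_inv _ _ hUorth, aux_conj_inv _ _ hUorth, hΔ]
    noncomm_ring
  have hfro : ∀ j l : Fin p,
      ∑ k, ∑ m, (Δt (j, k) (l, m)) ^ 2 = ∑ k, ∑ m, (Δ (j, k) (l, m)) ^ 2 := by
    intro j l
    have hentry : ∀ k m, Δt (j, k) (l, m)
        = (G j * (Matrix.of fun n r => Δ (j, n) (l, r)) * (G l)ᵀ) k m := by
      intro k m
      rw [hΔrel, blkD_conj_apply]
      simp only [Matrix.mul_apply, Matrix.transpose_apply, Matrix.of_apply, Finset.sum_mul]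
      rw [Finset.sum_comm]
    simp_rw [hentry]
    exact aux_trace (G j) (G l) _ (mul_eq_one_comm.mp (hGorth j))
      (mul_eq_one_comm.mp (hGorth l))
  refine ⟨fun j l => by rw [hfro j l], ?_⟩
  ext q
  simp only [Set.mem_setOf_eq, hfro q.1 q.2]
end Aux
end

section
/- Let $A^{(1)}, \dots, A^{(Q)} \in \mathbb{R}^{M \times M}$, $\rho > 0$, $\lambda_1, \lambda_2 \ge 0$, and consider minimizing over $Z^{(1)}, \dots, Z^{(Q)} \in \mathbb{R}^{M \times M}$ the function $\frac{\rho}{2} \sum_{q=1}^Q \|Z^{(q)} - A^{(q)}\|_F^2 + \lambda_1 \sum_{q=1}^Q \|Z^{(q)}\|_F + \lambda_2 \left( \sum_{q=1}^Q \|Z^{(q)}\|_F^2 \right)^{1/2}$. Then: (a) all $\hat Z^{(q)} = 0$ if and only if $\sqrt{\sum_{q=1}^Q (\|A^{(q)}\|_F - \lambda_1/\rho)_+^2} \le \lambda_2/\rho$; (b) otherwise, the minimizer is $\hat Z^{(q)} = \left( \frac{\|A^{(q)}\|_F - \lambda_1/\rho}{\|A^{(q)}\|_F} \right)_+ \left(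 1 - \frac{\lambda_2}{\rho \sqrt{\sum_{q'=1}^Q (\|A^{(q')}\|_F - \lambda_1/\rho)_+^2}} \right)_+ A^{(q)}$ for each $q$. -/
set_option maxHeartbeats 2000000


/-- The Frobenius norm of a real matrix. -/
noncomputable def frobNorm {M : ℕ} (A : Matrix (Fin M) (Fin M) ℝ) : ℝ :=
  Real.sqrt (∑ i, ∑ j, (A i j) ^ 2)

namespace GFProx

noncomputable def dot {M : ℕ} (A B : Matrix (Fin M) (Fin M) ℝ) : ℝ :=
  ∑ i, ∑ j, A i j * B i j

variable {M : ℕ}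

lemma sumsq_nonneg (A : Matrix (Fin M) (Fin M) ℝ) : 0 ≤ ∑ i, ∑ j, (A i j) ^ 2 :=
  Finset.sum_nonneg fun _ _ => Finset.sum_nonneg fun _ _ => sq_nonneg _

lemma frob_nonneg (A : Matrix (Fin M) (Fin M) ℝ) : 0 ≤ frobNorm A := Real.sqrt_nonneg _

lemma frob_sq (A : Matrix (Fin M) (Fin M) ℝ) : frobNorm A ^ 2 = ∑ i, ∑ j, (A i j) ^ 2 :=
  Real.sq_sqrt (sumsq_nonneg A)

lemma frob_eq_zero {A : Matrix (Fin M) (Fin M) ℝ} (h : frobNorm A = 0) : A = 0 := by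
  have h2 : ∑ i, ∑ j, (A i j) ^ 2 = 0 := by
    rw [← frob_sq A, h]; ring
  ext i j
  have hi := (Finset.sum_eq_zero_iff_of_nonneg (fun i _ =>
      Finset.sum_nonneg fun _ _ => sq_nonneg (A i _))).mp h2 i (Finset.mem_univ i)
  have hj := (Finset.sum_eq_zero_iff_of_nonneg (fun j _ => sq_nonneg (A i j))).mp hi j
    (Finset.mem_univ j)
  simpa using pow_eq_zero_iff (n := 2) (by norm_num) |>.mp hj

lemma frob_zero : frobNorm (0 : Matrix (Fin M) (Fin M) ℝ) = 0 := by
  simp [frobNorm]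

lemma frob_smul (t : ℝ) (A : Matrix (Fin M) (Fin M) ℝ) :
    frobNorm (t • A) = |t| * frobNorm A := by
  unfold frobNorm
  rw [← Real.sqrt_sq_eq_abs, ← Real.sqrt_mul (sq_nonneg t)]
  congr 1
  simp [Matrix.smul_apply, mul_pow, Finset.mul_sum]

lemma frob_sub_sq (X Y : Matrix (Fin M) (Fin M) ℝ) :
    frobNorm (X - Y) ^ 2 = frobNorm X ^ 2 - 2 * dot X Y + frobNorm Y ^ 2 := by
  rw [frob_sq, frob_sq, frob_sq]
  unfold dot
  have : ∀ i j, ((X - Y) i j) ^ 2 = X i j ^ 2 - 2 * (X i j * Y i j) + Y i j ^ 2 := by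
    intro i j; simp [Matrix.sub_apply]; ring
  simp_rw [this, Finset.sum_add_distrib, Finset.sum_sub_distrib, ← Finset.mul_sum]

lemma dot_comm (X Y : Matrix (Fin M) (Fin M) ℝ) : dot X Y = dot Y X := by
  unfold dot; simp_rw [mul_comm]

lemma dot_smul_right (t : ℝ) (X Y : Matrix (Fin M) (Fin M) ℝ) :
    dot X (t • Y) = t * dot X Y := by
  unfold dot
  simp_rw [Matrix.smul_apply, smul_eq_mul, Finset.mul_sum]
  congr 1; ext i; congr 1; ext j; ring

lemma dot_le (X Y : Matrix (Fin M) (Fin M) ℝ) : dot X Y ≤ frobNorm X * frobNorm Y := by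
  unfold dot frobNorm
  rw [← Fintype.sum_prod_type (f := fun p : Fin M × Fin M => X p.1 p.2 * Y p.1 p.2)]
  rw [← Fintype.sum_prod_type (f := fun p : Fin M × Fin M => X p.1 p.2 ^ 2)]
  rw [← Fintype.sum_prod_type (f := fun p : Fin M × Fin M => Y p.1 p.2 ^ 2)]
  exact Real.sum_mul_le_sqrt_mul_sqrt _ _ _

/-- The scalar reduction of the grouped proximal problem. -/
lemma scalar_key (Q : ℕ) (ρ lam1 lam2 : ℝ) (hρ : 0 < ρ) (_hlam1 : 0 ≤ lam1)
    (hlam2 : 0 ≤ lam2) (a : Fin Q → ℝ) (_ha : ∀ q, 0 ≤ a q)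
    (r : Fin Q → ℝ) (hr : ∀ q, 0 ≤ r q)
    (b : Fin Q → ℝ) (hbdef : ∀ q, b q = max (a q - lam1 / ρ) 0)
    (s c : ℝ) (hsdef : s = Real.sqrt (∑ q, b q ^ 2))
    (hcdef : c = max (1 - lam2 / (ρ * s)) 0)
    (rh : Fin Q → ℝ) (hrhdef : ∀ q, rh q = c * b q) :
    ρ/2 * ∑ q, (rh q - a q)^2 + lam1 * ∑ q, rh q + lam2 * Real.sqrt (∑ q, rh q ^2)
      + ρ/2 * ∑ q, (r q - rh q)^2
    ≤ ρ/2 * ∑ q, (r q - a q)^2 + lam1 * ∑ q, r q + lam2 * Real.sqrt (∑ q, r q ^2) := by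
  have hb : ∀ q, 0 ≤ b q := fun q => (hbdef q) ▸ le_max_right _ _
  have hs0 : 0 ≤ s := hsdef ▸ Real.sqrt_nonneg _
  have hc0 : 0 ≤ c := hcdef ▸ le_max_right _ _
  have hs2 : s ^ 2 = ∑ q, b q ^ 2 := by
    rw [hsdef]; exact Real.sq_sqrt (Finset.sum_nonneg fun _ _ => sq_nonneg _)
  have hbs : ∀ q, b q ≤ s := by
    intro q
    have h1 : b q ^ 2 ≤ ∑ q', b q' ^ 2 :=
      Finset.single_le_sum (f := fun q' => b q' ^ 2) (fun _ _ => sq_nonneg _) (Finset.mem_univ q)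
    calc b q = Real.sqrt (b q ^ 2) := (Real.sqrt_sq (hb q)).symm
      _ ≤ s := by rw [hsdef]; exact Real.sqrt_le_sqrt h1
  set m : ℝ := max s (lam2 / ρ) with hmdef
  have hsm : s ≤ m := le_max_left _ _
  have hm0 : 0 ≤ m := le_trans hs0 hsm
  set τ : Fin Q → ℝ := fun q => b q / m with hτdef
  -- central coefficient vanishes
  have hkey : 0 < s → ρ * c - ρ + lam2 / m = 0 := by
    intro hspos
    rcases le_or_gt s (lam2 / ρ) with hcase | hcase
    · have hm : m = lam2 / ρ := max_eq_right hcase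
      have hρs : ρ * s ≤ lam2 := by
        have := (le_div_iff₀ hρ).mp hcase
        linarith
      have hl2 : 0 < lam2 := lt_of_lt_of_le (by positivity) hρs
      have hc : c = 0 := by
        rw [hcdef, max_eq_right]
        have h1 : 1 ≤ lam2 / (ρ * s) := by
          rw [le_div_iff₀ (by positivity)]; linarith
        linarith
      rw [hc, hm]
      field_simp
      ring
    · have hm : m = s := max_eq_left hcase.le
      have hρs : lam2 < ρ * s := by
        have := (div_lt_iff₀ hρ).mp hcase
        linarith
      have hc : c = 1 - lam2 / (ρ * s) := by
        rw [hcdef, max_eq_left]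
        have h1 : lam2 / (ρ * s) < 1 := (div_lt_one (by positivity)).mpr hρs
        linarith
      rw [hc, hm]
      field_simp
      ring
  -- per-coordinate inequality
  have perq : ∀ q, ρ/2*(rh q - a q)^2 + lam1 * rh q + lam2*(τ q * rh q) + ρ/2*(r q - rh q)^2
      ≤ ρ/2*(r q - a q)^2 + lam1 * r q + lam2*(τ q * r q) := by
    intro q
    rcases eq_or_lt_of_le (hb q) with hbz | hbp
    · have hbq : b q = 0 := hbz.symm
      have hrhq : rh q = 0 := by rw [hrhdef, hbq, mul_zero]
      have hτq : τ q = 0 := by simp [hτdef, hbq]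
      have haq : ρ * a q ≤ lam1 := by
        have h1 : a q - lam1/ρ ≤ 0 := by
          by_contra hcon
          push_neg at hcon
          rw [hbdef q, max_eq_left hcon.le] at hbq
          linarith
        have h2 : a q ≤ lam1 / ρ := by linarith
        have := (le_div_iff₀ hρ).mp h2
        linarith
      have hterm : 0 ≤ (lam1 - ρ * a q) * r q := mul_nonneg (by linarith) (hr q)
      rw [hrhq, hτq]
      nlinarith [hterm]
    · have hspos : 0 < s := lt_of_lt_of_le hbp (hbs q)
      have hmpos : 0 < m := lt_of_lt_of_le hspos hsm
      have haq : a q = b q + lam1 / ρ := by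
        have h2 : b q = a q - lam1 / ρ := by
          rcases le_or_gt (a q - lam1/ρ) 0 with h | h
          · exfalso; rw [hbdef q, max_eq_right h] at hbp; exact lt_irrefl 0 hbp
          · rw [hbdef q]; exact max_eq_left h.le
        rw [h2]; ring
      have hcoef : ρ * (rh q - a q) + lam1 + lam2 * τ q = 0 := by
        have hexp : ρ * (rh q - a q) + lam1 + lam2 * τ q = b q * (ρ * c - ρ + lam2 / m) := by
          rw [hrhdef, haq, hτdef]
          field_simp
          ring
        rw [hexp, hkey hspos, mul_zero]
      have h0 : (ρ * (rh q - a q) + lam1 + lam2 * τ q) * (r q - rh q) = 0 := by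
        rw [hcoef, zero_mul]
      nlinarith [h0]
  -- group inequality
  have grp1 : ∑ q, τ q * r q ≤ Real.sqrt (∑ q, r q ^2) := by
    rcases eq_or_lt_of_le hm0 with hmz | hmp
    · have hsz : s = 0 := le_antisymm (hmz ▸ hsm) hs0
      have hbz : ∀ q, b q = 0 := fun q => le_antisymm (hsz ▸ hbs q) (hb q)
      have : ∀ q, τ q = 0 := fun q => by simp [hτdef, hbz q]
      simp only [this, zero_mul, Finset.sum_const_zero]
      positivity
    · have cs : ∑ q, b q * r q ≤ s * Real.sqrt (∑ q, r q^2) := by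
        rw [hsdef]; exact Real.sum_mul_le_sqrt_mul_sqrt _ _ _
      have he : ∑ q, τ q * r q = (∑ q, b q * r q) / m := by
        rw [Finset.sum_div]
        exact Finset.sum_congr rfl (fun q _ => by rw [hτdef]; exact div_mul_eq_mul_div _ _ _)
      rw [he, div_le_iff₀ hmp]
      have hsq0 : 0 ≤ Real.sqrt (∑ q, r q^2) := Real.sqrt_nonneg _
      nlinarith [cs]
  -- group equality at rh
  have grp2 : Real.sqrt (∑ q, rh q ^2) = ∑ q, τ q * rh q := by
    rcases eq_or_lt_of_le hs0 with hsz | hspos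
    · have hsz' : s = 0 := hsz.symm
      have hbz : ∀ q, b q = 0 := fun q => le_antisymm (hsz' ▸ hbs q) (hb q)
      have hrz : ∀ q, rh q = 0 := fun q => by rw [hrhdef, hbz q, mul_zero]
      simp [hrz]
    · have h1 : Real.sqrt (∑ q, rh q^2) = c * s := by
        simp_rw [hrhdef, mul_pow, ← Finset.mul_sum]
        rw [Real.sqrt_mul (sq_nonneg c), Real.sqrt_sq_eq_abs, abs_of_nonneg hc0, hsdef]
      have h2 : ∑ q, τ q * rh q = c * (s^2 / m) := by
        have hterm : ∀ q, τ q * rh q = c * b q ^ 2 / m := by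
          intro q; rw [hrhdef]; simp only [hτdef]; ring
        simp_rw [hterm]
        rw [← Finset.sum_div, ← Finset.mul_sum, ← hs2, mul_div_assoc]
      rw [h1, h2]
      rcases eq_or_lt_of_le hc0 with hcz | hcp
      · rw [← hcz]; ring
      · have hm : m = s := by
          have hρs : lam2 < ρ * s := by
            by_contra hcon
            push_neg at hcon
            have h1' : 1 ≤ lam2 / (ρ * s) := (one_le_div (by positivity)).mpr hcon
            rw [hcdef, max_eq_right (by linarith)] at hcp
            exact lt_irrefl 0 hcp
          apply max_eq_left
          rw [div_le_iff₀ hρ]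
          nlinarith
        rw [hm]
        field_simp
  -- assemble
  have e1 : ρ/2 * ∑ q, (rh q - a q)^2 + lam1 * ∑ q, rh q + lam2 * Real.sqrt (∑ q, rh q ^2)
      + ρ/2 * ∑ q, (r q - rh q)^2
      = ∑ q, (ρ/2*(rh q - a q)^2 + lam1 * rh q + lam2*(τ q * rh q) + ρ/2*(r q - rh q)^2) := by
    rw [grp2]
    rw [Finset.sum_add_distrib, Finset.sum_add_distrib, Finset.sum_add_distrib,
      ← Finset.mul_sum, ← Finset.mul_sum, ← Finset.mul_sum, ← Finset.mul_sum]
  have e2 : ∑ q, (ρ/2*(r q - a q)^2 + lam1 * r q + lam2*(τ q * r q))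
      = ρ/2 * ∑ q, (r q - a q)^2 + lam1 * ∑ q, r q + lam2 * ∑ q, τ q * r q := by
    rw [Finset.sum_add_distrib, Finset.sum_add_distrib,
      ← Finset.mul_sum, ← Finset.mul_sum, ← Finset.mul_sum]
  have step := Finset.sum_le_sum (fun q (_ : q ∈ Finset.univ) => perq q)
  rw [e1]
  calc ∑ q, (ρ/2*(rh q - a q)^2 + lam1 * rh q + lam2*(τ q * rh q) + ρ/2*(r q - rh q)^2)
      ≤ ∑ q, (ρ/2*(r q - a q)^2 + lam1 * r q + lam2*(τ q * r q)) := step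
    _ ≤ _ := by
        rw [e2]
        have := mul_le_mul_of_nonneg_left grp1 hlam2
        linarith

section Main

variable (Q : ℕ) (A : Fin Q → Matrix (Fin M) (Fin M) ℝ) (ρ lam1 lam2 : ℝ)

/-- `max ((a - l)/a) 0 * a = max (a - l) 0` when `0 ≤ a` and `0 ≤ l`. -/
lemma max_div_mul (hρ : 0 < ρ) (hlam1 : 0 ≤ lam1) (a : ℝ) (ha : 0 ≤ a) :
    max ((a - lam1 / ρ) / a) 0 * a = max (a - lam1 / ρ) 0 := by
  rcases eq_or_lt_of_le ha with h0 | hpos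
  · rw [← h0, mul_zero, eq_comm, max_eq_right]
    have : 0 ≤ lam1 / ρ := div_nonneg hlam1 hρ.le
    linarith
  · rw [max_mul_of_nonneg _ _ hpos.le, div_mul_cancel₀ _ (ne_of_gt hpos), zero_mul]

variable (hρ : 0 < ρ) (hlam1 : 0 ≤ lam1) (hlam2 : 0 ≤ lam2)
  (Zhat : Fin Q → Matrix (Fin M) (Fin M) ℝ)
  (hZhat : ∀ q, Zhat q =
      (max ((frobNorm (A q) - lam1 / ρ) / frobNorm (A q)) 0 *
        max (1 - lam2 / (ρ * Real.sqrt
          (∑ q', (max (frobNorm (A q') - lam1 / ρ) 0) ^ 2))) 0) • A q)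

include hρ hlam1 hlam2 hZhat

lemma frob_Zhat : ∀ q, frobNorm (Zhat q) =
    max (1 - lam2 / (ρ * Real.sqrt
      (∑ q', (max (frobNorm (A q') - lam1 / ρ) 0) ^ 2))) 0 *
    max (frobNorm (A q) - lam1 / ρ) 0 := by
  intro q
  rw [hZhat q, frob_smul, abs_of_nonneg (mul_nonneg (le_max_right _ _) (le_max_right _ _)),
    mul_right_comm, max_div_mul ρ lam1 hρ hlam1 _ (frob_nonneg _), mul_comm]

lemma main_ineq (G : (Fin Q → Matrix (Fin M) (Fin M) ℝ) → ℝ)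
    (hG : ∀ Z, G Z = ρ / 2 * ∑ q, (frobNorm (Z q - A q)) ^ 2 +
      lam1 * ∑ q, frobNorm (Z q) +
      lam2 * Real.sqrt (∑ q, (frobNorm (Z q)) ^ 2))
    (Z : Fin Q → Matrix (Fin M) (Fin M) ℝ) :
    G Zhat + ρ * ∑ q, (frobNorm (A q) * frobNorm (Z q) - dot (A q) (Z q))
      + ρ/2 * ∑ q, (frobNorm (Z q) - frobNorm (Zhat q))^2 ≤ G Z := by
  have hc0 : (0:ℝ) ≤ max (1 - lam2 / (ρ * Real.sqrt
      (∑ q', (max (frobNorm (A q') - lam1 / ρ) 0) ^ 2))) 0 := le_max_right _ _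
  have key := scalar_key Q ρ lam1 lam2 hρ hlam1 hlam2
    (fun q => frobNorm (A q)) (fun q => frob_nonneg _)
    (fun q => frobNorm (Z q)) (fun q => frob_nonneg _)
    (fun q => max (frobNorm (A q) - lam1 / ρ) 0) (fun q => rfl)
    (Real.sqrt (∑ q', (max (frobNorm (A q') - lam1 / ρ) 0) ^ 2))
    (max (1 - lam2 / (ρ * Real.sqrt
      (∑ q', (max (frobNorm (A q') - lam1 / ρ) 0) ^ 2))) 0) rfl rfl
    (fun q => max (1 - lam2 / (ρ * Real.sqrt
      (∑ q', (max (frobNorm (A q') - lam1 / ρ) 0) ^ 2))) 0 *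
      max (frobNorm (A q) - lam1 / ρ) 0) (fun q => rfl)
  -- rewrite the Zhat-dependent quantities
  have hsubq : ∀ q, frobNorm (Zhat q - A q) ^ 2 =
      (max (1 - lam2 / (ρ * Real.sqrt
        (∑ q', (max (frobNorm (A q') - lam1 / ρ) 0) ^ 2))) 0 *
        max (frobNorm (A q) - lam1 / ρ) 0 - frobNorm (A q)) ^ 2 := by
    intro q
    have h1 : Zhat q - A q = ((max ((frobNorm (A q) - lam1 / ρ) / frobNorm (A q)) 0 *
        max (1 - lam2 / (ρ * Real.sqrt
          (∑ q', (max (frobNorm (A q') - lam1 / ρ) 0) ^ 2))) 0) - 1) • A q := by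
      rw [hZhat q, sub_smul, one_smul]
    rw [h1, frob_smul, mul_pow, sq_abs]
    have h2 : max (1 - lam2 / (ρ * Real.sqrt
        (∑ q', (max (frobNorm (A q') - lam1 / ρ) 0) ^ 2))) 0 *
        max (frobNorm (A q) - lam1 / ρ) 0
        = (max ((frobNorm (A q) - lam1 / ρ) / frobNorm (A q)) 0 *
          max (1 - lam2 / (ρ * Real.sqrt
            (∑ q', (max (frobNorm (A q') - lam1 / ρ) 0) ^ 2))) 0) * frobNorm (A q) := by
      rw [mul_right_comm, max_div_mul ρ lam1 hρ hlam1 _ (frob_nonneg _), mul_comm]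
    rw [h2]; ring
  have hZAq : ∀ q, frobNorm (Z q - A q) ^ 2 =
      (frobNorm (Z q) - frobNorm (A q)) ^ 2
        + 2 * (frobNorm (A q) * frobNorm (Z q) - dot (A q) (Z q)) := by
    intro q
    rw [frob_sub_sq (Z q) (A q), dot_comm (Z q) (A q)]
    ring
  rw [hG Z, hG Zhat]
  simp_rw [frob_Zhat Q A ρ lam1 lam2 hρ hlam1 hlam2 Zhat hZhat, hsubq, hZAq]
  have hsplit : ∑ q, ((frobNorm (Z q) - frobNorm (A q)) ^ 2
      + 2 * (frobNorm (A q) * frobNorm (Z q) - dot (A q) (Z q)))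
      = ∑ q, (frobNorm (Z q) - frobNorm (A q)) ^ 2
        + 2 * ∑ q, (frobNorm (A q) * frobNorm (Z q) - dot (A q) (Z q)) := by
    rw [Finset.sum_add_distrib, ← Finset.mul_sum]
  rw [hsplit]
  linarith [key]

/-- Strict minimality of `Zhat` (holds unconditionally). -/
lemma strict (G : (Fin Q → Matrix (Fin M) (Fin M) ℝ) → ℝ)
    (hG : ∀ Z, G Z = ρ / 2 * ∑ q, (frobNorm (Z q - A q)) ^ 2 +
      lam1 * ∑ q, frobNorm (Z q) +
      lam2 * Real.sqrt (∑ q, (frobNorm (Z q)) ^ 2)) :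
    ∀ Z, Z ≠ Zhat → G Zhat < G Z := by
  intro Z hne
  have main := main_ineq Q A ρ lam1 lam2 hρ hlam1 hlam2 Zhat hZhat G hG Z
  have hd : ∀ q, 0 ≤ frobNorm (A q) * frobNorm (Z q) - dot (A q) (Z q) :=
    fun q => sub_nonneg.mpr (dot_le _ _)
  have hD1 : 0 ≤ ∑ q, (frobNorm (A q) * frobNorm (Z q) - dot (A q) (Z q)) :=
    Finset.sum_nonneg fun q _ => hd q
  have hD2 : 0 ≤ ∑ q, (frobNorm (Z q) - frobNorm (Zhat q))^2 :=
    Finset.sum_nonneg fun q _ => sq_nonneg _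
  rcases eq_or_lt_of_le (add_nonneg (mul_nonneg hρ.le hD1)
      (mul_nonneg (by linarith : (0:ℝ) ≤ ρ/2) hD2)) with hz | hpos
  swap
  · linarith
  -- the gap is zero: deduce Z = Zhat, contradiction
  exfalso
  have hS1 : ∑ q, (frobNorm (A q) * frobNorm (Z q) - dot (A q) (Z q)) = 0 := by
    nlinarith
  have hS2 : ∑ q, (frobNorm (Z q) - frobNorm (Zhat q))^2 = 0 := by
    nlinarith
  have ht1 := (Finset.sum_eq_zero_iff_of_nonneg (fun q _ => hd q)).mp hS1
  have ht2 := (Finset.sum_eq_zero_iff_of_nonneg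
    (fun q (_ : q ∈ Finset.univ) => sq_nonneg (frobNorm (Z q) - frobNorm (Zhat q)))).mp hS2
  apply hne
  funext q
  have e1 : frobNorm (A q) * frobNorm (Z q) = dot (A q) (Z q) := by
    have := ht1 q (Finset.mem_univ q); linarith
  have e2 : frobNorm (Z q) = frobNorm (Zhat q) := by
    have := ht2 q (Finset.mem_univ q)
    have := pow_eq_zero_iff (n := 2) (by norm_num) |>.mp this
    linarith
  have hfz : frobNorm (Zhat q) = (max ((frobNorm (A q) - lam1 / ρ) / frobNorm (A q)) 0 *
      max (1 - lam2 / (ρ * Real.sqrt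
        (∑ q', (max (frobNorm (A q') - lam1 / ρ) 0) ^ 2))) 0) * frobNorm (A q) := by
    rw [hZhat q, frob_smul, abs_of_nonneg (mul_nonneg (le_max_right _ _) (le_max_right _ _))]
  have h3 : frobNorm (Z q - Zhat q) ^ 2 = (frobNorm (Z q) - frobNorm (Zhat q)) ^ 2 := by
    rw [frob_sub_sq (Z q) (Zhat q)]
    rw [show dot (Z q) (Zhat q) = (max ((frobNorm (A q) - lam1 / ρ) / frobNorm (A q)) 0 *
        max (1 - lam2 / (ρ * Real.sqrt
          (∑ q', (max (frobNorm (A q') - lam1 / ρ) 0) ^ 2))) 0) * dot (Z q) (A q) from by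
      rw [hZhat q, dot_smul_right]]
    rw [dot_comm (Z q) (A q), ← e1, hfz]
    ring
  rw [e2, sub_self, zero_pow (by norm_num : (2:ℕ) ≠ 0)] at h3
  have h4 : frobNorm (Z q - Zhat q) = 0 :=
    pow_eq_zero_iff (n := 2) (by norm_num) |>.mp h3
  have h5 := frob_eq_zero h4
  exact sub_eq_zero.mp h5

end Main

end GFProx

/-- Closed-form solution of the grouped proximal problem
`min_Z  (ρ/2)∑_q ‖Z^q - A^q‖_F² + λ₁∑_q ‖Z^q‖_F + λ₂ (∑_q ‖Z^q‖_F²)^{1/2}`: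
(a) the all-zero tuple is the minimizer iff
`√(∑_q (‖A^q‖_F - λ₁/ρ)₊²) ≤ λ₂/ρ`; (b) otherwise the minimizer is
`Ẑ^q = ((‖A^q‖_F - λ₁/ρ)/‖A^q‖_F)₊ (1 - λ₂/(ρ√(∑ (‖A^{q'}‖_F - λ₁/ρ)₊²)))₊ A^q`. -/
theorem grouped_frob_prox (Q M : ℕ) (A : Fin Q → Matrix (Fin M) (Fin M) ℝ)
    (ρ lam1 lam2 : ℝ) (hρ : 0 < ρ) (hlam1 : 0 ≤ lam1) (hlam2 : 0 ≤ lam2)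
    (G : (Fin Q → Matrix (Fin M) (Fin M) ℝ) → ℝ)
    (hG : ∀ Z, G Z = ρ / 2 * ∑ q, (frobNorm (Z q - A q)) ^ 2 +
      lam1 * ∑ q, frobNorm (Z q) +
      lam2 * Real.sqrt (∑ q, (frobNorm (Z q)) ^ 2))
    (Zhat : Fin Q → Matrix (Fin M) (Fin M) ℝ)
    (hZhat : ∀ q, Zhat q =
      (max ((frobNorm (A q) - lam1 / ρ) / frobNorm (A q)) 0 *
        max (1 - lam2 / (ρ * Real.sqrt
          (∑ q', (max (frobNorm (A q') - lam1 / ρ) 0) ^ 2))) 0) • A q) :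
    ((∀ Z, G (fun _ => 0) ≤ G Z) ↔
      Real.sqrt (∑ q, (max (frobNorm (A q) - lam1 / ρ) 0) ^ 2) ≤ lam2 / ρ) ∧
    (¬ Real.sqrt (∑ q, (max (frobNorm (A q) - lam1 / ρ) 0) ^ 2) ≤ lam2 / ρ →
      ∀ Z, Z ≠ Zhat → G Zhat < G Z) := by
  have hstrict := GFProx.strict Q A ρ lam1 lam2 hρ hlam1 hlam2 Zhat hZhat G hG
  have hfrobZhat := GFProx.frob_Zhat Q A ρ lam1 lam2 hρ hlam1 hlam2 Zhat hZhat
  have hb : ∀ q : Fin Q, (0:ℝ) ≤ max (frobNorm (A q) - lam1 / ρ) 0 :=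
    fun q => le_max_right _ _
  have hbs : ∀ q : Fin Q, max (frobNorm (A q) - lam1 / ρ) 0 ≤
      Real.sqrt (∑ q', (max (frobNorm (A q') - lam1 / ρ) 0) ^ 2) := by
    intro q
    have h1 : (max (frobNorm (A q) - lam1 / ρ) 0) ^ 2
        ≤ ∑ q', (max (frobNorm (A q') - lam1 / ρ) 0) ^ 2 :=
      Finset.single_le_sum (f := fun q' => (max (frobNorm (A q') - lam1 / ρ) 0) ^ 2)
        (fun _ _ => sq_nonneg _) (Finset.mem_univ q)
    calc max (frobNorm (A q) - lam1 / ρ) 0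
        = Real.sqrt ((max (frobNorm (A q) - lam1 / ρ) 0) ^ 2) := (Real.sqrt_sq (hb q)).symm
      _ ≤ _ := Real.sqrt_le_sqrt h1
  constructor
  · constructor
    · -- minimality of 0 implies the threshold inequality
      intro hmin
      by_contra hs
      have hspos : 0 < Real.sqrt (∑ q, (max (frobNorm (A q) - lam1 / ρ) 0) ^ 2) :=
        lt_of_le_of_lt (div_nonneg hlam2 hρ.le) (not_le.mp hs)
      have hex : ∃ q, max (frobNorm (A q) - lam1 / ρ) 0 ≠ 0 := by
        by_contra hall
        push_neg at hall
        rw [show (∑ q, (max (frobNorm (A q) - lam1 / ρ) 0) ^ 2) = 0 from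
          Finset.sum_eq_zero (fun q _ => by rw [hall q]; ring), Real.sqrt_zero] at hspos
        exact lt_irrefl 0 hspos
      obtain ⟨q0, hq0⟩ := hex
      have hbq0 : 0 < max (frobNorm (A q0) - lam1 / ρ) 0 := lt_of_le_of_ne (hb q0) (Ne.symm hq0)
      have hcpos : 0 < max (1 - lam2 / (ρ * Real.sqrt
          (∑ q', (max (frobNorm (A q') - lam1 / ρ) 0) ^ 2))) 0 := by
        have hρs : lam2 < ρ * Real.sqrt (∑ q', (max (frobNorm (A q') - lam1 / ρ) 0) ^ 2) := by
          have := (div_lt_iff₀ hρ).mp (not_le.mp hs)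
          linarith
        have h1 : lam2 / (ρ * Real.sqrt (∑ q', (max (frobNorm (A q') - lam1 / ρ) 0) ^ 2)) < 1 :=
          (div_lt_one (mul_pos hρ hspos)).mpr hρs
        exact lt_of_lt_of_le (by linarith) (le_max_left _ _)
      have hZq0 : Zhat q0 ≠ 0 := by
        intro h0
        have h9 := hfrobZhat q0
        rw [h0, GFProx.frob_zero] at h9
        exact (mul_pos hcpos hbq0).ne' h9.symm
      have hne : (fun _ => 0 : Fin Q → Matrix (Fin M) (Fin M) ℝ) ≠ Zhat := by
        intro h
        exact hZq0 (congrFun h q0).symm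
      have h1 := hstrict _ hne
      have h2 := hmin Zhat
      linarith
    · -- threshold inequality implies 0 is a minimizer
      intro hs Z
      have hZhat0 : Zhat = (fun _ => 0 : Fin Q → Matrix (Fin M) (Fin M) ℝ) := by
        funext q
        apply GFProx.frob_eq_zero
        rw [hfrobZhat q]
        rcases eq_or_lt_of_le (Real.sqrt_nonneg
            (∑ q', (max (frobNorm (A q') - lam1 / ρ) 0) ^ 2)) with hsz | hspos
        · have : max (frobNorm (A q) - lam1 / ρ) 0 = 0 :=
            le_antisymm ((hbs q).trans hsz.ge) (hb q)
          rw [this, mul_zero]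
        · have hρs : ρ * Real.sqrt (∑ q', (max (frobNorm (A q') - lam1 / ρ) 0) ^ 2) ≤ lam2 := by
            have := (le_div_iff₀ hρ).mp hs
            linarith
          have h1 : 1 ≤ lam2 / (ρ * Real.sqrt (∑ q', (max (frobNorm (A q') - lam1 / ρ) 0) ^ 2)) := by
            rw [le_div_iff₀ (mul_pos hρ hspos)]
            linarith
          rw [max_eq_right (by linarith), zero_mul]
      have main := GFProx.main_ineq Q A ρ lam1 lam2 hρ hlam1 hlam2 Zhat hZhat G hG Z
      have hD1 : 0 ≤ ∑ q, (frobNorm (A q) * frobNorm (Z q) - GFProx.dot (A q) (Z q)) :=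
        Finset.sum_nonneg fun q _ => sub_nonneg.mpr (GFProx.dot_le _ _)
      have hD2 : 0 ≤ ∑ q, (frobNorm (Z q) - frobNorm (Zhat q))^2 :=
        Finset.sum_nonneg fun q _ => sq_nonneg _
      rw [← hZhat0]
      linarith [main, mul_nonneg hρ.le hD1,
        mul_nonneg (by linarith : (0:ℝ) ≤ ρ/2) hD2]
  · intro _ Z hne
    exact hstrict Z hne
end
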